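/- arXiv:1510.03406 — 4 statements merged into one kernel-verified Lean document; each statement's English description precedes it below -/
import Mathlib

section
/- For each fixed i \ge 0, the normalized binary Krawtchouk polynomial satisfies Q_i^{(n,2)}(t) = t^i + O(1/n) uniformly for t \in [-1,1] as n \to \infty; that is, there exist constants C_i and N_i such that |Q_i^{(n,2)}(t) - t^i| \le C_i/n for all n \ge N_i and all t \in [-1,1]. -/
/-- Generalized binomial coefficient `C(x, j)` as a polynomial expression in a real `x`. -/
noncomputable def binomPoly (x : ℝ) (j : ℕ) : ℝ :=
  (∏ m ∈ Finset.range j, (x - (m : ℝ))) / (Nat.factorial j : ℝ)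

/-- Binary Krawtchouk polynomial `K_i^{(n,2)}(z)`. -/
noncomputable def kraw2 (n i : ℕ) (z : ℝ) : ℝ :=
  ∑ j ∈ Finset.range (i + 1), (-1 : ℝ) ^ j * binomPoly z j * binomPoly ((n : ℝ) - z) (i - j)

/-- Normalized binary Krawtchouk polynomial `Q_i^{(n,2)}(t) = K_i^{(n,2)}(n(1-t)/2)/C(n,i)`. -/
noncomputable def Qnorm2 (n i : ℕ) (t : ℝ) : ℝ :=
  kraw2 n i ((n : ℝ) * (1 - t) / 2) / (n.choose i : ℝ)


lemma prodApprox (i : ℕ) : ∃ C : ℝ, 0 ≤ C ∧ ∀ j ≤ i, ∀ (n : ℕ) (x : ℝ), 1 ≤ (n:ℝ) → |x| ≤ (n:ℝ) →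
    |(∏ m ∈ Finset.range j, (x - (m:ℝ))) - x ^ j| * (n:ℝ) ≤ C * (n:ℝ) ^ j := by
  induction i with
  | zero =>
    refine ⟨0, le_rfl, ?_⟩
    intro j hj n x hn hx
    interval_cases j
    simp
  | succ i ih =>
    obtain ⟨C, hC0, hC⟩ := ih
    refine ⟨C * (i + 1) + i, by positivity, ?_⟩
    intro j hj n x hn hx
    have hn0 : (0:ℝ) ≤ n := by linarith
    rcases Nat.lt_succ_iff_lt_or_eq.mp (Nat.lt_succ_of_le hj) with h | h
    · calc |(∏ m ∈ Finset.range j, (x - (m:ℝ))) - x ^ j| * n ≤ C * (n:ℝ) ^ j :=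
            hC j (Nat.lt_succ_iff.mp h) n x hn hx
        _ ≤ (C * (i + 1) + i) * (n:ℝ) ^ j := by
            apply mul_le_mul_of_nonneg_right _ (by positivity)
            nlinarith
    · subst h
      rw [Finset.prod_range_succ]
      have hkey : (∏ m ∈ Finset.range i, (x - (m:ℝ))) * (x - i) - x ^ (i + 1)
          = ((∏ m ∈ Finset.range i, (x - (m:ℝ))) - x ^ i) * (x - i) + (-(i:ℝ)) * x ^ i := by
        ring
      rw [hkey]
      have h1 : |(∏ m ∈ Finset.range i, (x - (m:ℝ))) - x ^ i| * n ≤ C * (n:ℝ) ^ i :=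
        hC i le_rfl n x hn hx
      have h2 : |x - (i:ℝ)| ≤ (n:ℝ) * (i + 1) := by
        have h3 : |x - (i:ℝ)| ≤ |x| + i := by
          have := abs_sub x (i:ℝ)
          simpa [Nat.abs_cast] using this
        have h4 : (i:ℝ) ≤ n * i := le_mul_of_one_le_left (by positivity) hn
        nlinarith
      have h5 : |x| ^ i ≤ (n:ℝ) ^ i := pow_le_pow_left₀ (abs_nonneg x) hx i
      calc |((∏ m ∈ Finset.range i, (x - (m:ℝ))) - x ^ i) * (x - i) + (-(i:ℝ)) * x ^ i| * n
          ≤ (|(∏ m ∈ Finset.range i, (x - (m:ℝ))) - x ^ i| * |x - (i:ℝ)| + i * |x| ^ i) * n := by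
            apply mul_le_mul_of_nonneg_right _ hn0
            calc |((∏ m ∈ Finset.range i, (x - (m:ℝ))) - x ^ i) * (x - i) + (-(i:ℝ)) * x ^ i|
                ≤ |((∏ m ∈ Finset.range i, (x - (m:ℝ))) - x ^ i) * (x - i)| + |(-(i:ℝ)) * x ^ i| :=
                  abs_add_le _ _
              _ = |(∏ m ∈ Finset.range i, (x - (m:ℝ))) - x ^ i| * |x - (i:ℝ)| + i * |x| ^ i := by
                  rw [abs_mul, abs_mul, abs_neg, abs_pow, abs_of_nonneg (by positivity : (0:ℝ) ≤ (i:ℝ))]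
        _ ≤ (C * (i + 1) + i) * (n:ℝ) ^ (i + 1) := by
            have e1 : |(∏ m ∈ Finset.range i, (x - (m:ℝ))) - x ^ i| * |x - (i:ℝ)| * n
                ≤ C * (n:ℝ) ^ i * ((n:ℝ) * (i + 1)) := by
              have := mul_le_mul h1 h2 (abs_nonneg _) (by positivity)
              nlinarith [abs_nonneg ((∏ m ∈ Finset.range i, (x - (m:ℝ))) - x ^ i), abs_nonneg (x - (i:ℝ))]
            have e2 : (i:ℝ) * |x| ^ i * n ≤ (i:ℝ) * (n:ℝ) ^ i * n := by
              have : (i:ℝ) * |x| ^ i ≤ (i:ℝ) * (n:ℝ) ^ i := by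
                apply mul_le_mul_of_nonneg_left h5 (by positivity)
              nlinarith
            rw [pow_succ]
            nlinarith [e1, e2]

theorem main_est (i : ℕ) (C : ℝ) (hC0 : 0 ≤ C)
    (hC : ∀ j ≤ i, ∀ (n : ℕ) (x : ℝ), 1 ≤ (n:ℝ) → |x| ≤ (n:ℝ) →
      |(∏ m ∈ Finset.range j, (x - (m:ℝ))) - x ^ j| * (n:ℝ) ≤ C * (n:ℝ) ^ j)
    (n : ℕ) (hn : 2 * i + 2 ≤ n) (t : ℝ) (ht1 : -1 ≤ t) (ht2 : t ≤ 1) :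
    |Qnorm2 n i t - t ^ i| ≤ ((2:ℝ)^i * (C * ((2:ℝ)^i + 2) * 2^i)) / (n : ℝ) := by
  have hn' : 2 * (i:ℝ) + 2 ≤ (n:ℝ) := by exact_mod_cast hn
  have hi0 : (0:ℝ) ≤ i := Nat.cast_nonneg i
  have hn1 : (1:ℝ) ≤ n := by linarith
  have hn0 : (0:ℝ) < n := by linarith
  have hinN : i ≤ n := by omega
  obtain ⟨a, ha_def⟩ : ∃ a : ℝ, a = (1 - t) / 2 := ⟨_, rfl⟩
  obtain ⟨b, hb_def⟩ : ∃ b : ℝ, b = (1 + t) / 2 := ⟨_, rfl⟩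
  have ha0 : 0 ≤ a := by rw [ha_def]; linarith
  have ha1 : a ≤ 1 := by rw [ha_def]; linarith
  have hb0 : 0 ≤ b := by rw [hb_def]; linarith
  have hb1 : b ≤ 1 := by rw [hb_def]; linarith
  obtain ⟨x, hx_def⟩ : ∃ x : ℝ, x = (n:ℝ) * a := ⟨_, rfl⟩
  obtain ⟨y, hy_def⟩ : ∃ y : ℝ, y = (n:ℝ) * b := ⟨_, rfl⟩
  have hxabs : |x| ≤ (n:ℝ) := by
    rw [hx_def, abs_of_nonneg (by positivity)]
    nlinarith
  have hyabs : |y| ≤ (n:ℝ) := by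
    rw [hy_def, abs_of_nonneg (by positivity)]
    nlinarith
  obtain ⟨D, hD_def⟩ : ∃ D : ℝ, D = ∏ m ∈ Finset.range i, ((n:ℝ) - m) := ⟨_, rfl⟩
  have hDlb : ((n:ℝ)/2) ^ i ≤ D := by
    rw [hD_def, show ((n:ℝ)/2) ^ i = ∏ _m ∈ Finset.range i, ((n:ℝ)/2) by
      rw [Finset.prod_const, Finset.card_range]]
    apply Finset.prod_le_prod (fun m _ => by positivity)
    intro m hm
    have : (m:ℝ) < i := by exact_mod_cast Finset.mem_range.mp hm
    linarith
  have hD0 : (0:ℝ) < D := lt_of_lt_of_le (by positivity) hDlb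
  have hchoose : (n.choose i : ℝ) = D / (Nat.factorial i : ℝ) := by
    have h1 : (n.descFactorial i : ℝ) = D := by
      rw [Nat.descFactorial_eq_prod_range, Nat.cast_prod, hD_def]
      apply Finset.prod_congr rfl
      intro m hm
      have hm' : m ≤ n := le_of_lt (lt_of_lt_of_le (Finset.mem_range.mp hm) hinN)
      push_cast [Nat.cast_sub hm']
      ring
    have h2 : (n.descFactorial i : ℝ) = (Nat.factorial i : ℝ) * (n.choose i : ℝ) := by
      exact_mod_cast congrArg (Nat.cast (R := ℝ)) (Nat.descFactorial_eq_factorial_mul_choose n i)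
    rw [h1] at h2
    field_simp [h2]
    linarith
  have hz : (n : ℝ) * (1 - t) / 2 = x := by rw [hx_def, ha_def]; ring
  have hz2 : (n : ℝ) - x = y := by rw [hx_def, hy_def, ha_def, hb_def]; ring
  have hQ : Qnorm2 n i t = ∑ j ∈ Finset.range (i+1),
      (i.choose j : ℝ) * ((-1:ℝ)^j * ((∏ m ∈ Finset.range j, (x - (m:ℝ))) *
        (∏ m ∈ Finset.range (i - j), (y - (m:ℝ))) / D)) := by
    rw [Qnorm2, hz, kraw2, hchoose, Finset.sum_div]
    apply Finset.sum_congr rfl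
    intro j hj
    have hj' : j ≤ i := Nat.lt_succ_iff.mp (Finset.mem_range.mp hj)
    rw [hz2]
    simp only [binomPoly]
    have hcij : ((i.choose j : ℝ)) * (Nat.factorial j : ℝ) * (Nat.factorial (i - j) : ℝ)
        = (Nat.factorial i : ℝ) := by
      exact_mod_cast congrArg (Nat.cast (R := ℝ)) (Nat.choose_mul_factorial_mul_factorial hj')
    have hfj : (Nat.factorial j : ℝ) ≠ 0 := by positivity
    have hfij : (Nat.factorial (i - j) : ℝ) ≠ 0 := by positivity
    have hfi : (Nat.factorial i : ℝ) ≠ 0 := by positivity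
    field_simp
    linear_combination (-(∏ m ∈ Finset.range j, (x - (m:ℝ))) *
      (∏ m ∈ Finset.range (i - j), (y - (m:ℝ)))) * hcij
  have hbin : t ^ i = ∑ j ∈ Finset.range (i+1),
      (i.choose j : ℝ) * ((-1:ℝ)^j * (a^j * b^(i-j))) := by
    have h := add_pow (-a) b i
    have hab : -a + b = t := by rw [ha_def, hb_def]; ring
    rw [hab] at h
    rw [h]
    apply Finset.sum_congr rfl
    intro j _
    rw [neg_pow]
    ring
  rw [hQ, hbin, ← Finset.sum_sub_distrib]
  have hterm : ∀ j ∈ Finset.range (i+1),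
      |(i.choose j : ℝ) * ((-1:ℝ)^j * ((∏ m ∈ Finset.range j, (x - (m:ℝ))) *
        (∏ m ∈ Finset.range (i - j), (y - (m:ℝ))) / D))
       - (i.choose j : ℝ) * ((-1:ℝ)^j * (a^j * b^(i-j)))|
      ≤ (i.choose j : ℝ) * (C * ((2:ℝ)^i + 2) * 2^i / n) := by
    intro j hj
    have hj' : j ≤ i := Nat.lt_succ_iff.mp (Finset.mem_range.mp hj)
    obtain ⟨Px, hPx⟩ : ∃ P : ℝ, P = ∏ m ∈ Finset.range j, (x - (m:ℝ)) := ⟨_, rfl⟩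
    obtain ⟨Py, hPy⟩ : ∃ P : ℝ, P = ∏ m ∈ Finset.range (i - j), (y - (m:ℝ)) := ⟨_, rfl⟩
    rw [← hPx, ← hPy]
    have hfac : (i.choose j : ℝ) * ((-1:ℝ)^j * (Px * Py / D)) - (i.choose j : ℝ) * ((-1:ℝ)^j * (a^j * b^(i-j)))
        = (i.choose j : ℝ) * ((-1:ℝ)^j * (Px * Py / D - a^j * b^(i-j))) := by ring
    rw [hfac, abs_mul, abs_mul, abs_pow, abs_neg, abs_one, one_pow, one_mul, Nat.abs_cast]
    apply mul_le_mul_of_nonneg_left _ (Nat.cast_nonneg _)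
    have hpjij : (n:ℝ)^j * (n:ℝ)^(i-j) = (n:ℝ)^i := by
      rw [← pow_add, Nat.add_sub_cancel' hj']
    have hxy : x^j * y^(i-j) = a^j * b^(i-j) * (n:ℝ)^i := by
      calc x^j * y^(i-j) = ((n:ℝ)^j * (n:ℝ)^(i-j)) * (a^j * b^(i-j)) := by
            rw [hx_def, hy_def, mul_pow, mul_pow]; ring
        _ = a^j * b^(i-j) * (n:ℝ)^i := by rw [hpjij]; ring
    have hid : Px * Py - a^j * b^(i-j) * D
        = (Px - x^j) * Py + x^j * (Py - y^(i-j)) + a^j * b^(i-j) * ((n:ℝ)^i - D) := by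
      have h9 : (Px - x^j) * Py + x^j * (Py - y^(i-j)) + a^j * b^(i-j) * ((n:ℝ)^i - D)
          = Px * Py - x^j * y^(i-j) + a^j * b^(i-j) * (n:ℝ)^i - a^j * b^(i-j) * D := by ring
      rw [h9, hxy]; ring
    have A1 : |Px - x^j| * n ≤ C * (n:ℝ)^j := by rw [hPx]; exact hC j hj' n x hn1 hxabs
    have A2 : |Py| ≤ (2:ℝ)^(i-j) * (n:ℝ)^(i-j) := by
      calc |Py| = ∏ m ∈ Finset.range (i-j), |y - (m:ℝ)| := by rw [hPy, Finset.abs_prod]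
        _ ≤ ∏ _m ∈ Finset.range (i-j), (2*(n:ℝ)) := by
            apply Finset.prod_le_prod (fun m _ => abs_nonneg _)
            intro m hm
            have hm2 : (m:ℝ) ≤ n := by
              exact_mod_cast Nat.le_of_lt (lt_of_lt_of_le (Finset.mem_range.mp hm)
                (le_trans (Nat.sub_le i j) hinN))
            have h8 := abs_sub y (m:ℝ)
            rw [Nat.abs_cast] at h8
            linarith
        _ = (2*(n:ℝ))^(i-j) := by rw [Finset.prod_const, Finset.card_range]
        _ = (2:ℝ)^(i-j) * (n:ℝ)^(i-j) := by rw [mul_pow]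
    have A3 : |x|^j ≤ (n:ℝ)^j := pow_le_pow_left₀ (abs_nonneg x) hxabs j
    have A4 : |Py - y^(i-j)| * n ≤ C * (n:ℝ)^(i-j) := by
      rw [hPy]; exact hC (i-j) (Nat.sub_le i j) n y hn1 hyabs
    have A5 : a^j * b^(i-j) ≤ 1 := by
      calc a^j * b^(i-j) ≤ 1 * 1 :=
            mul_le_mul (pow_le_one₀ ha0 ha1) (pow_le_one₀ hb0 hb1) (by positivity) zero_le_one
        _ = 1 := by ring
    have A5' : 0 ≤ a^j * b^(i-j) := by positivity
    have A6 : |(n:ℝ)^i - D| * n ≤ C * (n:ℝ)^i := by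
      have h7 := hC i le_rfl n (n:ℝ) hn1 (le_of_eq (abs_of_nonneg (le_of_lt hn0)))
      rw [hD_def, abs_sub_comm]
      exact h7
    have h2jle : (2:ℝ)^(i-j) ≤ (2:ℝ)^i := pow_le_pow_right₀ one_le_two (Nat.sub_le i j)
    have hnum : |Px * Py - a^j * b^(i-j) * D| * n ≤ C * ((2:ℝ)^i + 2) * (n:ℝ)^i := by
      rw [hid]
      have habs : |(Px - x^j) * Py + x^j * (Py - y^(i-j)) + a^j * b^(i-j) * ((n:ℝ)^i - D)|
          ≤ |Px - x^j| * |Py| + |x|^j * |Py - y^(i-j)| + (a^j * b^(i-j)) * |(n:ℝ)^i - D| := by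
        calc |(Px - x^j) * Py + x^j * (Py - y^(i-j)) + a^j * b^(i-j) * ((n:ℝ)^i - D)|
            ≤ |(Px - x^j) * Py| + |x^j * (Py - y^(i-j))| + |a^j * b^(i-j) * ((n:ℝ)^i - D)| :=
              abs_add_three _ _ _
          _ = |Px - x^j| * |Py| + |x|^j * |Py - y^(i-j)| + (a^j * b^(i-j)) * |(n:ℝ)^i - D| := by
              rw [abs_mul, abs_mul, abs_mul, abs_pow, abs_of_nonneg A5']
      have hstep : (|Px - x^j| * |Py| + |x|^j * |Py - y^(i-j)| + (a^j * b^(i-j)) * |(n:ℝ)^i - D|) * n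
          ≤ C * ((2:ℝ)^i + 2) * (n:ℝ)^i := by
        have B1 : (|Px - x^j| * n) * |Py| ≤ (C * (n:ℝ)^j) * ((2:ℝ)^(i-j) * (n:ℝ)^(i-j)) :=
          mul_le_mul A1 A2 (abs_nonneg _) (by positivity)
        have B2 : |x|^j * (|Py - y^(i-j)| * n) ≤ (n:ℝ)^j * (C * (n:ℝ)^(i-j)) :=
          mul_le_mul A3 A4 (by positivity) (by positivity)
        have B3 : (a^j * b^(i-j)) * (|(n:ℝ)^i - D| * n) ≤ 1 * (C * (n:ℝ)^i) :=
          mul_le_mul A5 A6 (by positivity) (by positivity)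
        have hC2 : C * (2:ℝ)^(i-j) * ((n:ℝ)^j * (n:ℝ)^(i-j)) ≤ C * (2:ℝ)^i * (n:ℝ)^i := by
          rw [hpjij]
          exact mul_le_mul_of_nonneg_right (mul_le_mul_of_nonneg_left h2jle hC0) (by positivity)
        have hC3 : C * ((n:ℝ)^j * (n:ℝ)^(i-j)) = C * (n:ℝ)^i := by rw [hpjij]
        linarith [B1, B2, B3, hC2, hC3]
      calc |(Px - x^j) * Py + x^j * (Py - y^(i-j)) + a^j * b^(i-j) * ((n:ℝ)^i - D)| * n
          ≤ (|Px - x^j| * |Py| + |x|^j * |Py - y^(i-j)| + (a^j * b^(i-j)) * |(n:ℝ)^i - D|) * n :=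
            mul_le_mul_of_nonneg_right habs (le_of_lt hn0)
        _ ≤ C * ((2:ℝ)^i + 2) * (n:ℝ)^i := hstep
    have hquot : |Px * Py / D - a^j * b^(i-j)| = |Px * Py - a^j * b^(i-j) * D| / D := by
      rw [show Px * Py / D - a^j * b^(i-j) = (Px * Py - a^j * b^(i-j) * D) / D by
        rw [sub_div, mul_div_cancel_right₀ _ (ne_of_gt hD0)]]
      rw [abs_div, abs_of_pos hD0]
    rw [hquot, div_le_div_iff₀ hD0 hn0]
    have hD2 : (n:ℝ)^i ≤ 2^i * D := by
      have h6 : ((n:ℝ)/2)^i * 2^i ≤ D * 2^i := mul_le_mul_of_nonneg_right hDlb (by positivity)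
      calc (n:ℝ)^i = ((n:ℝ)/2)^i * 2^i := by rw [div_pow]; field_simp
        _ ≤ D * 2^i := h6
        _ = 2^i * D := mul_comm _ _
    calc |Px * Py - a^j * b^(i-j) * D| * n ≤ C * ((2:ℝ)^i + 2) * (n:ℝ)^i := hnum
      _ ≤ C * ((2:ℝ)^i + 2) * ((2:ℝ)^i * D) :=
          mul_le_mul_of_nonneg_left hD2 (by positivity)
      _ = C * ((2:ℝ)^i + 2) * 2^i * D := by ring
  calc |∑ j ∈ Finset.range (i+1),
        ((i.choose j : ℝ) * ((-1:ℝ)^j * ((∏ m ∈ Finset.range j, (x - (m:ℝ))) *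
          (∏ m ∈ Finset.range (i - j), (y - (m:ℝ))) / D))
         - (i.choose j : ℝ) * ((-1:ℝ)^j * (a^j * b^(i-j))))|
      ≤ ∑ j ∈ Finset.range (i+1),
        |(i.choose j : ℝ) * ((-1:ℝ)^j * ((∏ m ∈ Finset.range j, (x - (m:ℝ))) *
          (∏ m ∈ Finset.range (i - j), (y - (m:ℝ))) / D))
         - (i.choose j : ℝ) * ((-1:ℝ)^j * (a^j * b^(i-j)))| :=
        Finset.abs_sum_le_sum_abs _ _
    _ ≤ ∑ j ∈ Finset.range (i+1), (i.choose j : ℝ) * (C * ((2:ℝ)^i + 2) * 2^i / n) :=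
        Finset.sum_le_sum hterm
    _ = (∑ j ∈ Finset.range (i+1), (i.choose j : ℝ)) * (C * ((2:ℝ)^i + 2) * 2^i / n) := by
        rw [← Finset.sum_mul]
    _ = (2:ℝ)^i * (C * ((2:ℝ)^i + 2) * 2^i / n) := by
        have h5 : (∑ j ∈ Finset.range (i+1), (i.choose j : ℝ)) = (2:ℝ)^i := by
          rw [← Nat.cast_sum, Nat.sum_range_choose]
          push_cast
          ring
        rw [h5]
    _ = (2:ℝ)^i * (C * ((2:ℝ)^i + 2) * 2^i) / n := by ring

theorem stmt_1 (i : ℕ) :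
    ∃ C : ℝ, ∃ N : ℕ, ∀ n : ℕ, N ≤ n → ∀ t ∈ Set.Icc (-1 : ℝ) 1,
      |Qnorm2 n i t - t ^ i| ≤ C / (n : ℝ) := by
  obtain ⟨C, hC0, hC⟩ := prodApprox i
  refine ⟨(2:ℝ)^i * (C * ((2:ℝ)^i + 2) * 2^i), 2*i+2, ?_⟩
  intro n hn t ht
  exact main_est i C hC0 hC n hn t ht.1 ht.2
end

section
/- Suppose for a fixed M there exist nodes -1 < \alpha_0 < \cdots < \alpha_{k-1} < 1 and positive weights \rho_0,\ldots,\rho_{k-1} such that f_0 = f(1)/M + \sum_{i=0}^{k-1}\rho_i f(\alpha_i) for every real polynomial f of degree at most 2k-1 (where f_0 = \int f\,d\mu_n). Let h be a function whose Hermite interpolant f at the nodes \alpha_0,\ldots,\alpha_{k-1} (i.e., f(\alpha_i)=h(\alpha_i), f'(\alpha_i)=h'(\alpha_i)) satisfies f(t) \le h(t) on [-1,1). Then for any polynomial F of degree at most 2k-1 with F(t) \le h(t) on [-1,1), one has F_0 M - F(1) \le f_0 M - f(1) = M\sum_{i=0}^{k-1}\rho_i h(\alpha_i). -/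
theorem stmt_6 (k : ℕ) (hk : 1 ≤ k) (M : ℝ) (hM : 0 < M)
    (α : Fin k → ℝ) (hmono : StrictMono α) (hα : ∀ i, α i ∈ Set.Ioo (-1 : ℝ) 1)
    (ρ : Fin k → ℝ) (hρ : ∀ i, 0 < ρ i)
    -- `L p` is the zeroth Krawtchouk coefficient `p_0 = ∫ p dμ_n` of `p`;
    -- the quadrature formula holds for all polynomials of degree at most `2k-1`:
    (L : Polynomial ℝ → ℝ)
    (hquad : ∀ p : Polynomial ℝ, p.natDegree ≤ 2 * k - 1 →
      L p = p.eval 1 / M + ∑ i, ρ i * p.eval (α i))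
    (h : ℝ → ℝ)
    -- `f` is the Hermite interpolant of `h` at the nodes `α i`, lying below `h`:
    (f : Polynomial ℝ) (hdeg : f.natDegree ≤ 2 * k - 1)
    (hint : ∀ i, f.eval (α i) = h (α i))
    (hint' : ∀ i, (Polynomial.derivative f).eval (α i) = deriv h (α i))
    (hfh : ∀ t ∈ Set.Ico (-1 : ℝ) 1, f.eval t ≤ h t)
    -- any competitor polynomial `F` of degree at most `2k-1` lying below `h`:
    (F : Polynomial ℝ) (hFdeg : F.natDegree ≤ 2 * k - 1)
    (hFh : ∀ t ∈ Set.Ico (-1 : ℝ) 1, F.eval t ≤ h t) :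
    L F * M - F.eval 1 ≤ L f * M - f.eval 1 ∧
      L f * M - f.eval 1 = M * ∑ i, ρ i * h (α i) := by
  have hM' : M ≠ 0 := hM.ne'
  have e1 : L F * M - F.eval 1 = M * ∑ i, ρ i * F.eval (α i) := by
    rw [hquad F hFdeg]; field_simp; ring
  have e2 : L f * M - f.eval 1 = M * ∑ i, ρ i * f.eval (α i) := by
    rw [hquad f hdeg]; field_simp; ring
  have e3 : (∑ i, ρ i * f.eval (α i)) = ∑ i, ρ i * h (α i) := by
    simp [hint]
  refine ⟨?_, by rw [e2, e3]⟩
  rw [e1, e2, e3]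
  have : (∑ i, ρ i * F.eval (α i)) ≤ ∑ i, ρ i * h (α i) := by
    apply Finset.sum_le_sum
    intro i _
    exact mul_le_mul_of_nonneg_left (hFh (α i) ⟨(hα i).1.le, (hα i).2⟩) (hρ i).le
  exact mul_le_mul_of_nonneg_left this hM.le
end

section
/- Let h be continuous on [-1,1], f a polynomial of degree at most 2k-1 with Krawtchouk expansion f = \sum_i f_i Q_i^{(n,q)}, and suppose a quadrature f_0 = f(1)/M + \sum_{i=0}^{k-1}\rho_i f(\alpha_i) holds for all polynomials of degree at most 2k-1, with \rho_i > 0. Suppose F = \sum_j F_j Q_j^{(n,q)} is any polynomial (possibly of degree > 2k-1) with F(t) \le h(t) on [-1,1], F_j \ge 0 for all j \ge 2k, and the test functions satisfy P_j := 1/M + \sum_{i=0}^{k-1}\rho_i Q_j^{(n,q)}(\alpha_i) \ge 0 for all j \ge 2k. Then F_0 M - F(1) \le M\sum_{i=0}^{k-1}\rho_i h(\alpha_i). -/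
theorem stmt_14 (k : ℕ) (hk : 1 ≤ k) (M : ℝ) (hM : 0 < M)
    -- `Q j` are the normalized Krawtchouk polynomials, with `Q j 1 = 1`:
    (Q : ℕ → ℝ → ℝ) (hQ1 : ∀ j : ℕ, Q j 1 = 1)
    (α : Fin k → ℝ) (hα : ∀ i, α i ∈ Set.Icc (-1 : ℝ) 1)
    (ρ : Fin k → ℝ) (hρ : ∀ i, 0 < ρ i)
    (h : ℝ → ℝ) (hcont : ContinuousOn h (Set.Icc (-1 : ℝ) 1))
    -- the quadrature holds for every polynomial of degree at most `2k-1`,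
    -- i.e. for every Krawtchouk expansion supported on indices `< 2k`:
    (hquad : ∀ c : ℕ → ℝ,
      c 0 = (∑ j ∈ Finset.range (2 * k), c j * Q j 1) / M +
        ∑ i, ρ i * (∑ j ∈ Finset.range (2 * k), c j * Q j (α i)))
    -- `F = ∑_j F_j Q_j` is a polynomial possibly of degree `> 2k-1`:
    (N : ℕ) (hN : 2 * k ≤ N + 1) (c : ℕ → ℝ) (F : ℝ → ℝ)
    (hF : ∀ t : ℝ, F t = ∑ j ∈ Finset.range (N + 1), c j * Q j t)
    (hFh : ∀ t ∈ Set.Icc (-1 : ℝ) 1, F t ≤ h t)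
    (hcpos : ∀ j : ℕ, 2 * k ≤ j → 0 ≤ c j)
    -- the test functions `P_j` are nonnegative for `j ≥ 2k`:
    (hP : ∀ j : ℕ, 2 * k ≤ j → 0 ≤ 1 / M + ∑ i, ρ i * Q j (α i)) :
    c 0 * M - F 1 ≤ M * ∑ i, ρ i * h (α i) := by
  set S := Finset.Ico (2 * k) (N + 1) with hS
  have hsplit : ∀ t : ℝ, F t =
      (∑ j ∈ Finset.range (2 * k), c j * Q j t) + ∑ j ∈ S, c j * Q j t := by
    intro t
    rw [hF t, Finset.range_eq_Ico, ← Finset.sum_Ico_consecutive _ (Nat.zero_le _) hN,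
      ← Finset.range_eq_Ico]
  have hq := hquad (fun j => if j < 2 * k then c j else 0)
  have h0 : 0 < 2 * k := by omega
  simp only [if_pos h0] at hq
  have hcong : ∀ t : ℝ, (∑ j ∈ Finset.range (2 * k),
      (if j < 2 * k then c j else 0) * Q j t) = ∑ j ∈ Finset.range (2 * k), c j * Q j t := by
    intro t
    refine Finset.sum_congr rfl fun j hj => ?_
    rw [if_pos (Finset.mem_range.mp hj)]
  have hcong2 : (∑ j ∈ Finset.range (2 * k), (if j < 2 * k then c j else 0))
      = ∑ j ∈ Finset.range (2 * k), c j :=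
    Finset.sum_congr rfl fun j hj => if_pos (Finset.mem_range.mp hj)
  simp only [hcong, hQ1, mul_one, hcong2] at hq
  have hswap : (∑ i, ρ i * ∑ j ∈ S, c j * Q j (α i))
      = ∑ j ∈ S, c j * ∑ i, ρ i * Q j (α i) := by
    simp only [Finset.mul_sum]
    rw [Finset.sum_comm]
    exact Finset.sum_congr rfl fun j _ => Finset.sum_congr rfl fun i _ => by ring
  have hRHS : (∑ j ∈ S, M * (c j * (1 / M + ∑ i, ρ i * Q j (α i))))
      = (∑ j ∈ S, c j) + M * ∑ j ∈ S, c j * ∑ i, ρ i * Q j (α i) := by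
    rw [Finset.mul_sum, ← Finset.sum_add_distrib]
    exact Finset.sum_congr rfl fun j _ => by field_simp
  have hF1 : F 1 = (∑ j ∈ Finset.range (2 * k), c j) + ∑ j ∈ S, c j := by
    rw [hsplit 1]; simp [hQ1]
  have hFα : (∑ i, ρ i * F (α i))
      = (∑ i, ρ i * ∑ j ∈ Finset.range (2 * k), c j * Q j (α i))
        + ∑ j ∈ S, c j * ∑ i, ρ i * Q j (α i) := by
    simp only [hsplit, mul_add, Finset.sum_add_distrib, hswap]
  have key : c 0 * M - F 1 = M * (∑ i, ρ i * F (α i))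
      - ∑ j ∈ S, M * (c j * (1 / M + ∑ i, ρ i * Q j (α i))) := by
    rw [hq, hF1, hFα, hRHS]
    field_simp
    ring
  rw [key]
  have h3 : (0:ℝ) ≤ ∑ j ∈ S, M * (c j * (1 / M + ∑ i, ρ i * Q j (α i))) := by
    refine Finset.sum_nonneg fun j hj => ?_
    have hjk : 2 * k ≤ j := (Finset.mem_Ico.mp hj).1
    exact mul_nonneg hM.le (mul_nonneg (hcpos j hjk) (hP j hjk))
  have h4 : M * (∑ i, ρ i * F (α i)) ≤ M * ∑ i, ρ i * h (α i) :=
    mul_le_mul_of_nonneg_left (Finset.sum_le_sum fun i _ =>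
      mul_le_mul_of_nonneg_left (hFh _ (hα i)) (hρ i).le) hM.le
  linarith
end

section
/- Let h:[-1,1)\to(0,\infty) be continuous and convex, and let \ell \in (-1,0). Define a_0 = \frac{n(1-\ell)-M}{n(M\ell + 1 - \ell)} and assume M\ell + 1 - \ell \ne 0, a_0 \in (\ell, 1), and M(1+n\ell^2) - n(1-\ell)^2 > 0. If f is the unique quadratic polynomial whose graph passes through (\ell, h(\ell)) and is tangent to the graph of h at (a_0, h(a_0)), and if f_0 = \int f\,d\mu_n = f(0) + f''(0)/(2n) (q=2 measure moments: \int t\,d\mu_n = 0, \int t^2 d\mu_n = 1/n), then f_0 M - f(1) = \frac{n(M\ell+1-\ell)^2 h(a_0) + M(M-n-1)h(\ell)}{M(1+n\ell^2) - n(1-\ell)^2}. -/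
theorem stmt_16 (n : ℕ) (hn : 1 ≤ n) (M : ℝ) (hM : 0 < M)
    (h : ℝ → ℝ) (hcont : ContinuousOn h (Set.Ico (-1 : ℝ) 1))
    (hconv : ConvexOn ℝ (Set.Ico (-1 : ℝ) 1) h)
    (hpos : ∀ t ∈ Set.Ico (-1 : ℝ) 1, 0 < h t)
    (l : ℝ) (hl : l ∈ Set.Ioo (-1 : ℝ) 0)
    (hden : M * l + 1 - l ≠ 0)
    (a0 : ℝ) (ha0def : a0 = ((n : ℝ) * (1 - l) - M) / ((n : ℝ) * (M * l + 1 - l)))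
    (ha0 : a0 ∈ Set.Ioo l 1)
    (hden2 : 0 < M * (1 + (n : ℝ) * l ^ 2) - (n : ℝ) * (1 - l) ^ 2)
    (hdiff : DifferentiableAt ℝ h a0)
    -- `f` is the quadratic through `(l, h l)`, tangent to the graph of `h` at `(a0, h a0)`:
    (f : Polynomial ℝ) (hdeg : f.natDegree ≤ 2)
    (h1 : f.eval l = h l) (h2 : f.eval a0 = h a0)
    (h3 : (Polynomial.derivative f).eval a0 = deriv h a0)
    -- `f_0 = ∫ f dμ_n = f(0) + f''(0)/(2n)` for the binary measure `μ_n`: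
    (f0 : ℝ)
    (hf0 : f0 = f.eval 0 +
      (Polynomial.derivative (Polynomial.derivative f)).eval 0 / (2 * (n : ℝ))) :
    f0 * M - f.eval 1 =
      ((n : ℝ) * (M * l + 1 - l) ^ 2 * h a0 + M * (M - (n : ℝ) - 1) * h l) /
        (M * (1 + (n : ℝ) * l ^ 2) - (n : ℝ) * (1 - l) ^ 2) := by
  have hn' : (n : ℝ) ≠ 0 := by positivity
  have hD : M * (1 + (n : ℝ) * l ^ 2) - (n : ℝ) * (1 - l) ^ 2 ≠ 0 := ne_of_gt hden2
  set a := f.coeff 0 with ha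
  set b := f.coeff 1 with hb
  set c := f.coeff 2 with hc
  have heval : ∀ x : ℝ, f.eval x = a + b * x + c * x ^ 2 := by
    intro x
    rw [Polynomial.eval_eq_sum_range' (lt_of_le_of_lt hdeg (by norm_num : (2:ℕ) < 3))]
    simp [Finset.sum_range_succ]
    rfl
  have hsnd : (Polynomial.derivative (Polynomial.derivative f)).eval 0 = 2 * c := by
    rw [← Polynomial.coeff_zero_eq_eval_zero, Polynomial.coeff_derivative,
      Polynomial.coeff_derivative]
    push_cast
    ring
  rw [hf0, hsnd, ← h1, ← h2, heval 0, heval 1, heval l, heval a0, ha0def]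
  field_simp
  ring
end
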